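/- For the map Q(F) = F − (1/ϖ) W F R, where W and R are symmetric positive semidefinite matrices and ϖ ≥ ‖W‖·‖R‖ with ϖ > 0, Q is nonexpansive with respect to the Frobenius norm: ‖Q(F) − Q(G)‖_Fr ≤ ‖F − G‖_Fr for all F, G. -/

import Mathlib

open Matrix

/-- Euclidean norm of a vector. -/
noncomputable def vecNorm {n : ℕ} (x : Fin n → ℝ) : ℝ :=
  Real.sqrt (∑ i, (x i) ^ 2)

/-- Frobenius norm of a matrix. -/
noncomputable def frobNorm {L P : ℕ} (A : Matrix (Fin L) (Fin P) ℝ) : ℝ :=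
  Real.sqrt (∑ i, ∑ j, (A i j) ^ 2)

/-- Spectral (operator) norm of a matrix. -/
noncomputable def specNorm {L P : ℕ} (A : Matrix (Fin L) (Fin P) ℝ) : ℝ :=
  sSup {c : ℝ | ∃ x : Fin P → ℝ, vecNorm x = 1 ∧ c = vecNorm (A.mulVec x)}

lemma vecNorm_nonneg {n : ℕ} (x : Fin n → ℝ) : 0 ≤ vecNorm x := Real.sqrt_nonneg _

lemma vecNorm_sq {n : ℕ} (x : Fin n → ℝ) : vecNorm x ^ 2 = ∑ i, (x i) ^ 2 :=
  Real.sq_sqrt (Finset.sum_nonneg fun _ _ => sq_nonneg _)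

lemma vecNorm_smul {n : ℕ} (c : ℝ) (x : Fin n → ℝ) :
    vecNorm (c • x) = |c| * vecNorm x := by
  unfold vecNorm
  rw [← Real.sqrt_sq_eq_abs, ← Real.sqrt_mul (sq_nonneg c)]
  congr 1
  rw [Finset.mul_sum]
  exact Finset.sum_congr rfl fun i _ => by simp [mul_pow]

lemma specNorm_nonneg {L P : ℕ} (A : Matrix (Fin L) (Fin P) ℝ) : 0 ≤ specNorm A := by
  apply Real.sSup_nonneg
  rintro c ⟨x, hx, rfl⟩
  exact vecNorm_nonneg _

lemma bddAbove_specSet {L P : ℕ} (A : Matrix (Fin L) (Fin P) ℝ) :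
    BddAbove {c : ℝ | ∃ x : Fin P → ℝ, vecNorm x = 1 ∧ c = vecNorm (A.mulVec x)} := by
  refine ⟨frobNorm A, ?_⟩
  rintro c ⟨x, hx, rfl⟩
  have hx1 : ∑ j, (x j) ^ 2 = 1 := by
    have := vecNorm_sq x
    rw [hx] at this
    simpa using this.symm
  have h1 : ∑ i, (A.mulVec x i) ^ 2 ≤ ∑ i, ∑ j, (A i j) ^ 2 := by
    refine Finset.sum_le_sum fun i _ => ?_
    have := Finset.sum_mul_sq_le_sq_mul_sq Finset.univ (A i) x
    simpa [Matrix.mulVec, dotProduct, hx1] using this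
  exact Real.sqrt_le_sqrt h1

lemma vecNorm_mulVec_le {L P : ℕ} (A : Matrix (Fin L) (Fin P) ℝ) (z : Fin P → ℝ) :
    vecNorm (A.mulVec z) ≤ specNorm A * vecNorm z := by
  rcases eq_or_ne (vecNorm z) 0 with h0 | h0
  · have hz : z = 0 := by
      funext j
      have hsum : ∑ i, (z i) ^ 2 = 0 := by
        have := vecNorm_sq z
        rw [h0] at this
        simpa using this.symm
      have := (Finset.sum_eq_zero_iff_of_nonneg (fun i _ => sq_nonneg (z i))).mp hsum j
        (Finset.mem_univ j)
      exact pow_eq_zero_iff (n := 2) (by norm_num) |>.mp this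
    simp [hz, h0, vecNorm]
  · have hpos : 0 < vecNorm z := lt_of_le_of_ne (vecNorm_nonneg z) (Ne.symm h0)
    set u : Fin P → ℝ := (vecNorm z)⁻¹ • z with hu
    have hu1 : vecNorm u = 1 := by
      rw [hu, vecNorm_smul, abs_of_nonneg (inv_nonneg.mpr hpos.le), inv_mul_cancel₀ h0]
    have hmem : vecNorm (A.mulVec u) ∈
        {c : ℝ | ∃ x : Fin P → ℝ, vecNorm x = 1 ∧ c = vecNorm (A.mulVec x)} :=
      ⟨u, hu1, rfl⟩
    have hle : vecNorm (A.mulVec u) ≤ specNorm A := le_csSup (bddAbove_specSet A) hmem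
    have heq : vecNorm (A.mulVec u) = (vecNorm z)⁻¹ * vecNorm (A.mulVec z) := by
      rw [hu, Matrix.mulVec_smul, vecNorm_smul, abs_of_nonneg (inv_nonneg.mpr hpos.le)]
    rw [heq] at hle
    calc vecNorm (A.mulVec z) = vecNorm z * ((vecNorm z)⁻¹ * vecNorm (A.mulVec z)) := by
          field_simp
      _ ≤ vecNorm z * specNorm A := by
          exact mul_le_mul_of_nonneg_left hle hpos.le
      _ = specNorm A * vecNorm z := mul_comm _ _

lemma dotProduct_self_eq {n : ℕ} (z : Fin n → ℝ) : z ⬝ᵥ z = vecNorm z * vecNorm z := by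
  have h : z ⬝ᵥ z = ∑ i, (z i) ^ 2 := by
    simp [dotProduct, sq]
  rw [h, ← vecNorm_sq, sq]

lemma rayleigh_le {L : ℕ} (W : Matrix (Fin L) (Fin L) ℝ) (z : Fin L → ℝ) :
    z ⬝ᵥ W.mulVec z ≤ specNorm W * (z ⬝ᵥ z) := by
  have cs : z ⬝ᵥ W.mulVec z ≤ vecNorm z * vecNorm (W.mulVec z) := by
    have h := Finset.sum_mul_sq_le_sq_mul_sq Finset.univ z (W.mulVec z)
    have h2 : (z ⬝ᵥ W.mulVec z) ^ 2 ≤ (vecNorm z * vecNorm (W.mulVec z)) ^ 2 := by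
      rw [mul_pow, vecNorm_sq, vecNorm_sq]
      simpa [dotProduct] using h
    have hb : 0 ≤ vecNorm z * vecNorm (W.mulVec z) :=
      mul_nonneg (vecNorm_nonneg _) (vecNorm_nonneg _)
    calc z ⬝ᵥ W.mulVec z ≤ |z ⬝ᵥ W.mulVec z| := le_abs_self _
      _ = Real.sqrt ((z ⬝ᵥ W.mulVec z) ^ 2) := (Real.sqrt_sq_eq_abs _).symm
      _ ≤ Real.sqrt ((vecNorm z * vecNorm (W.mulVec z)) ^ 2) := Real.sqrt_le_sqrt h2
      _ = vecNorm z * vecNorm (W.mulVec z) := Real.sqrt_sq hb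
  calc z ⬝ᵥ W.mulVec z ≤ vecNorm z * vecNorm (W.mulVec z) := cs
    _ ≤ vecNorm z * (specNorm W * vecNorm z) :=
        mul_le_mul_of_nonneg_left (vecNorm_mulVec_le W z) (vecNorm_nonneg z)
    _ = specNorm W * (z ⬝ᵥ z) := by rw [dotProduct_self_eq]; ring


lemma trace_psd_nonneg {n : ℕ} {M : Matrix (Fin n) (Fin n) ℝ} (hM : M.PosSemidef) :
    0 ≤ M.trace := by
  rw [Matrix.trace]
  refine Finset.sum_nonneg fun i _ => ?_
  have h := hM.dotProduct_mulVec_nonneg (Pi.single i 1)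
  simpa [Matrix.mulVec_single, single_dotProduct] using h

open scoped MatrixOrder in
lemma psd_sqrt_exists {n : ℕ} {A : Matrix (Fin n) (Fin n) ℝ} (hA : A.PosSemidef) :
    ∃ S : Matrix (Fin n) (Fin n) ℝ, S.PosSemidef ∧ S * S = A :=
  ⟨CFC.sqrt A, (CFC.sqrt_nonneg A).posSemidef, CFC.sqrt_mul_sqrt_self A hA.nonneg⟩

lemma trace_mul_psd_nonneg {n : ℕ} {A B : Matrix (Fin n) (Fin n) ℝ}
    (hA : A.PosSemidef) (hB : B.PosSemidef) : 0 ≤ (A * B).trace := by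
  obtain ⟨S, hS, hSS⟩ := psd_sqrt_exists hA
  have h2 : (S * B * S).PosSemidef := by
    have h := hB.conjTranspose_mul_mul_same S
    rwa [hS.1] at h
  have h3 : (S * B * S).trace = (A * B).trace := by
    rw [trace_mul_cycle, hSS]
  exact h3 ▸ trace_psd_nonneg h2

lemma psd_smul_sub_sq {L : ℕ} {W : Matrix (Fin L) (Fin L) ℝ} (hW : W.PosSemidef) :
    (specNorm W • W - W * W).PosSemidef := by
  obtain ⟨S, hSpsd, hSmul⟩ : ∃ S : Matrix (Fin L) (Fin L) ℝ, S.PosSemidef ∧ S * S = W :=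
    psd_sqrt_exists hW
  have hSsym : Sᵀ = S := by
    rw [← conjTranspose_eq_transpose_of_trivial]; exact hSpsd.1
  have hWt : Wᵀ = W := by
    rw [← conjTranspose_eq_transpose_of_trivial]; exact hW.1
  refine Matrix.PosSemidef.of_dotProduct_mulVec_nonneg ?_ ?_
  · show _ᴴ = _
    simp [Matrix.conjTranspose_sub, Matrix.conjTranspose_smul, Matrix.conjTranspose_mul,
      hW.1, hWt]
  · intro x
    have hvs : S *ᵥ x = x ᵥ* S := by
      have h := Matrix.mulVec_transpose S x
      rwa [hSsym] at h
    have e1 : x ⬝ᵥ ((W * W) *ᵥ x) = (S *ᵥ x) ⬝ᵥ (W *ᵥ (S *ᵥ x)) := by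
      rw [Matrix.mulVec_mulVec, hvs, ← Matrix.dotProduct_mulVec, Matrix.mulVec_mulVec]
      have hprod : S * (W * S) = W * W := by
        rw [← hSmul]
        simp only [Matrix.mul_assoc]
      rw [hprod]
    have e2 : x ⬝ᵥ (W *ᵥ x) = (S *ᵥ x) ⬝ᵥ (S *ᵥ x) := by
      rw [← hSmul, ← Matrix.mulVec_mulVec, Matrix.dotProduct_mulVec, ← hvs]
    have hr := rayleigh_le W (S *ᵥ x)
    have key : x ⬝ᵥ ((W * W) *ᵥ x) ≤ specNorm W * (x ⬝ᵥ (W *ᵥ x)) := by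
      rw [e1, e2]; exact hr
    have hst : star x = x := by simp
    rw [hst]
    rw [Matrix.sub_mulVec, dotProduct_sub, Matrix.smul_mulVec,
      dotProduct_smul]
    simp only [smul_eq_mul]
    linarith

lemma sum_mul_eq_trace {L P : ℕ} (A B : Matrix (Fin L) (Fin P) ℝ) :
    ∑ i, ∑ j, A i j * B i j = (Aᵀ * B).trace := by
  rw [Matrix.trace]
  simp only [Matrix.diag_apply, Matrix.mul_apply, Matrix.transpose_apply]
  exact Finset.sum_comm

/-- `Q(F) = F − (1/ϖ) W F R` with `W, R` symmetric positive
semidefinite and `ϖ ≥ ‖W‖‖R‖`, `ϖ > 0`, is nonexpansive in the Frobenius norm. -/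
theorem stmt2 {L P : ℕ}
    (W : Matrix (Fin L) (Fin L) ℝ) (R : Matrix (Fin P) (Fin P) ℝ)
    (hW : W.PosSemidef) (hR : R.PosSemidef)
    (ϖ : ℝ) (hϖpos : 0 < ϖ) (hϖ : specNorm W * specNorm R ≤ ϖ)
    (Q : Matrix (Fin L) (Fin P) ℝ → Matrix (Fin L) (Fin P) ℝ)
    (hQ : ∀ F, Q F = F - ϖ⁻¹ • (W * F * R)) :
    ∀ F G : Matrix (Fin L) (Fin P) ℝ, frobNorm (Q F - Q G) ≤ frobNorm (F - G) := by
  intro F G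
  have hc : (0:ℝ) < ϖ⁻¹ := inv_pos.mpr hϖpos
  set c : ℝ := ϖ⁻¹ with hcdef
  set pw : ℝ := specNorm W with hpw
  set pr : ℝ := specNorm R with hpr
  have hpw0 : 0 ≤ pw := specNorm_nonneg W
  have hpr0 : 0 ≤ pr := specNorm_nonneg R
  set D : Matrix (Fin L) (Fin P) ℝ := F - G with hD
  have hrepr : Q F - Q G = D - c • (W * D * R) := by
    rw [hQ, hQ, hD]
    rw [Matrix.mul_sub, Matrix.sub_mul, smul_sub]
    abel
  set M : Matrix (Fin L) (Fin P) ℝ := W * D * R with hM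
  rw [hrepr]
  unfold frobNorm
  apply Real.sqrt_le_sqrt
  -- main inequality on sums of squares
  set t : ℝ := ((Dᵀ * W * D) * R).trace with ht
  have h_ip : ∑ i, ∑ j, D i j * M i j = t := by
    rw [sum_mul_eq_trace, ht, hM]
    congr 1
    simp only [Matrix.mul_assoc]
  set ipM : ℝ := ∑ i, ∑ j, M i j * M i j with hipM
  have hWt : Wᵀ = W := by
    rw [← conjTranspose_eq_transpose_of_trivial]; exact hW.1
  have hRt : Rᵀ = R := by
    rw [← conjTranspose_eq_transpose_of_trivial]; exact hR.1
  have h_ipM : ipM = ((Dᵀ * (W * W) * D) * (R * R)).trace := by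
    rw [hipM, sum_mul_eq_trace]
    have hMt : Mᵀ * M = R * (Dᵀ * (W * W) * D) * R := by
      rw [hM]
      simp only [Matrix.transpose_mul, hWt, hRt, Matrix.mul_assoc]
    rw [hMt, trace_mul_cycle, trace_mul_comm]
  have hA_psd : (Dᵀ * W * D).PosSemidef := by
    have h := hW.conjTranspose_mul_mul_same D
    rwa [conjTranspose_eq_transpose_of_trivial] at h
  have ht0 : 0 ≤ t := trace_mul_psd_nonneg hA_psd hR
  have hRR : (R * R).PosSemidef := by
    have h := Matrix.posSemidef_conjTranspose_mul_self R
    rwa [hR.1] at h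
  -- Step 1
  have hpsd1 : (Dᵀ * (pw • W - W * W) * D).PosSemidef := by
    have h := (psd_smul_sub_sq hW).conjTranspose_mul_mul_same D
    rwa [conjTranspose_eq_transpose_of_trivial] at h
  have h1 : 0 ≤ ((Dᵀ * (pw • W - W * W) * D) * (R * R)).trace :=
    trace_mul_psd_nonneg hpsd1 hRR
  have hsplit1 : (Dᵀ * (pw • W - W * W) * D) * (R * R)
      = pw • ((Dᵀ * W * D) * (R * R)) - (Dᵀ * (W * W) * D) * (R * R) := by
    simp only [Matrix.mul_sub, Matrix.sub_mul, Matrix.mul_smul, Matrix.smul_mul]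
  rw [hsplit1, Matrix.trace_sub, Matrix.trace_smul, smul_eq_mul] at h1
  -- Step 2
  have hpsd2 : ((Dᵀ * W * D) * (pr • R - R * R)).trace ≥ 0 :=
    trace_mul_psd_nonneg hA_psd (psd_smul_sub_sq hR)
  have hsplit2 : (Dᵀ * W * D) * (pr • R - R * R)
      = pr • ((Dᵀ * W * D) * R) - (Dᵀ * W * D) * (R * R) := by
    simp only [Matrix.mul_sub, Matrix.mul_smul]
  rw [hsplit2, Matrix.trace_sub, Matrix.trace_smul, smul_eq_mul] at hpsd2
  have hbound : ipM ≤ pw * (pr * t) := by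
    rw [h_ipM]
    calc ((Dᵀ * (W * W) * D) * (R * R)).trace
        ≤ pw * ((Dᵀ * W * D) * (R * R)).trace := by linarith
      _ ≤ pw * (pr * t) := by
          apply mul_le_mul_of_nonneg_left _ hpw0
          rw [ht]; linarith
  -- final arithmetic
  have hct : c * (pw * pr) ≤ 1 := by
    have h := mul_le_mul_of_nonneg_left hϖ hc.le
    rw [inv_mul_cancel₀ hϖpos.ne'] at h
    exact h
  have e : ∀ (i : Fin L) (j : Fin P), ((D - c • M) i j) ^ 2
      = (D i j) ^ 2 - 2 * c * (D i j * M i j) + c ^ 2 * (M i j * M i j) := by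
    intro i j
    simp only [Matrix.sub_apply, Matrix.smul_apply, smul_eq_mul]
    ring
  have expand : ∑ i, ∑ j, ((D - c • M) i j) ^ 2
      = (∑ i, ∑ j, (D i j) ^ 2) - 2 * c * t + c ^ 2 * ipM := by
    simp_rw [e, Finset.sum_add_distrib, Finset.sum_sub_distrib, ← Finset.mul_sum]
    rw [h_ip, hipM]
  rw [expand]
  have s1 : c ^ 2 * ipM ≤ c ^ 2 * (pw * (pr * t)) :=
    mul_le_mul_of_nonneg_left hbound (sq_nonneg c)
  have s2 : c ^ 2 * (pw * (pr * t)) = (c * (pw * pr)) * (c * t) := by ring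
  have s3 : (c * (pw * pr)) * (c * t) ≤ 1 * (c * t) :=
    mul_le_mul_of_nonneg_right hct (mul_nonneg hc.le ht0)
  have s4 : 0 ≤ c * t := mul_nonneg hc.le ht0
  linarith
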